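/- Let L be the language with one binary function symbol s and one constant symbol 0, and let B be the L-structure with universe ℕ ∪ {∞}, with 0 interpreted as the natural number 0, and s^B(a,b) = 0 if a, b ∈ ℕ and b = a + 1, and s^B(a,b) = 1 otherwise. Then there is no primitive positive L-formula φ(x₁,…,xₙ,y) defining a function in {B} together with elements a₁,…,aₙ ∈ ℕ such that B ⊨ φ(ā, ∞). Hence the implication 'epic substructure implies primitive positive generation' fails for the class {B}, which is not closed under ultraproducts. -/

import Mathlib

open FirstOrder FirstOrder.Language

namespace EpicExample

/-- The function symbols of the language `L = {s, 0}`: a single constant symbol `zero`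
and a single binary function symbol `s`. -/
inductive Fns : ℕ → Type
  | zero : Fns 0
  | s : Fns 2

/-- The language with one binary function symbol `s` and one constant symbol `0`. -/
def Lsig : FirstOrder.Language := ⟨Fns, fun _ => Empty⟩

/-- The universe `ℕ ∪ {∞}` of the structure `B`, with `none` playing the role of `∞`. -/
abbrev OB := Option ℕ

/-- The interpretation of the binary symbol `s`:
`s(a,b) = 0` if `a, b ∈ ℕ` and `b = a + 1`, and `s(a,b) = 1` otherwise. -/
def sB : OB → OB → OB
  | some a, some b => if b = a + 1 then some 0 else some 1
  | _, _ => some 1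

instance : Lsig.Structure OB where
  funMap {_} f x :=
    match f with
    | .zero => some 0
    | .s => sB (x 0) (x 1)
  RelMap {_} r _ := r.elim

/-- A finite conjunction of atomic formulas. -/
inductive IsConjAtomic {L : FirstOrder.Language} {α : Type*} :
    ∀ {n : ℕ}, L.BoundedFormula α n → Prop
  | of_isAtomic {n : ℕ} {φ : L.BoundedFormula α n} : φ.IsAtomic → IsConjAtomic φ
  | inf {n : ℕ} {φ ψ : L.BoundedFormula α n} :
      IsConjAtomic φ → IsConjAtomic ψ → IsConjAtomic (φ ⊓ ψ)

/-- A primitive positive formula: a block of existential quantifiers in front of a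
finite conjunction of atomic formulas. -/
inductive IsPP {L : FirstOrder.Language} {α : Type*} :
    ∀ {n : ℕ}, L.BoundedFormula α n → Prop
  | of_conj {n : ℕ} {φ : L.BoundedFormula α n} : IsConjAtomic φ → IsPP φ
  | ex {n : ℕ} {φ : L.BoundedFormula α (n + 1)} : IsPP φ → IsPP φ.ex


/-- Replace `∞` by the natural number `N`, leaving naturals untouched. -/
def g (N : ℕ) : OB → OB := fun o => some (o.getD N)

lemma sB_g (N : ℕ) (_hN : 3 ≤ N) (a b : OB)
    (ha : ∀ k, a = some k → k + 1 < N) (hb : ∀ k, b = some k → k + 1 < N) :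
    sB (g N a) (g N b) = sB a b := by
  cases a with
  | none =>
    cases b with
    | none =>
      simp only [g, Option.getD_none, sB]
      rw [if_neg (by omega)]
    | some k =>
      have := hb k rfl
      simp only [g, Option.getD_none, Option.getD_some, sB]
      rw [if_neg (by omega)]
  | some j =>
    have hj := ha j rfl
    cases b with
    | none =>
      simp only [g, Option.getD_none, Option.getD_some, sB]
      rw [if_neg (by omega)]
    | some k => rfl

lemma sB_small (N : ℕ) (hN : 3 ≤ N) (a b : OB) :
    ∀ k, sB a b = some k → k + 1 < N := by
  intro k hk
  rcases a with _ | j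
  · simp only [sB, Option.some.injEq] at hk; omega
  rcases b with _ | i
  · simp only [sB, Option.some.injEq] at hk; omega
  · simp only [sB] at hk
    split at hk <;> simp only [Option.some.injEq] at hk <;> omega

lemma g_sB (N : ℕ) (a b : OB) : g N (sB a b) = sB a b := by
  rcases a with _ | j <;> rcases b with _ | i <;> try rfl
  simp only [sB]; split <;> rfl

lemma term_g (N : ℕ) (hN : 3 ≤ N) {β : Type} (v : β → OB)
    (hv : ∀ b k, v b = some k → k + 1 < N) (t : Lsig.Term β) :
    (Term.realize (fun b => g N (v b)) t = g N (Term.realize v t)) ∧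
      (∀ k, Term.realize v t = some k → k + 1 < N) := by
  induction t with
  | var b => exact ⟨rfl, hv b⟩
  | @func l f ts ih =>
    cases f with
    | zero =>
      refine ⟨rfl, ?_⟩
      intro k hk
      have : (some 0 : OB) = some k := hk
      simp only [Option.some.injEq] at this
      omega
    | s =>
      have h0 := ih 0
      have h1 := ih 1
      constructor
      · show sB (Term.realize (fun b => g N (v b)) (ts 0))
            (Term.realize (fun b => g N (v b)) (ts 1)) = g N (sB _ _)
        rw [h0.1, h1.1, sB_g N hN _ _ h0.2 h1.2, g_sB]
      · exact sB_small N hN _ _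

lemma elim_g (N : ℕ) {α : Type} {m : ℕ} (v : α → OB) (xs : Fin m → OB) :
    Sum.elim (g N ∘ v) (g N ∘ xs) = fun b => g N (Sum.elim v xs b) := by
  funext b; cases b <;> rfl

lemma conj_g (N : ℕ) (hN : 3 ≤ N) {α : Type} {m : ℕ}
    {φ : Lsig.BoundedFormula α m} (h : IsConjAtomic φ)
    (v : α → OB) (xs : Fin m → OB)
    (hv : ∀ b k, Sum.elim v xs b = some k → k + 1 < N)
    (hr : φ.Realize v xs) : φ.Realize (g N ∘ v) (g N ∘ xs) := by
  induction h with
  | of_isAtomic ha =>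
    cases ha with
    | equal t₁ t₂ =>
      rw [BoundedFormula.realize_bdEqual] at hr ⊢
      rw [elim_g, (term_g N hN _ hv t₁).1, (term_g N hN _ hv t₂).1, hr]
    | rel R ts => exact R.elim
  | inf h1 h2 ih1 ih2 =>
    rw [BoundedFormula.realize_inf] at hr ⊢
    exact ⟨ih1 hr.1, ih2 hr.2⟩

lemma pp_g {α : Type} [Fintype α] {m : ℕ} {φ : Lsig.BoundedFormula α m}
    (h : IsPP φ) : ∀ (v : α → OB) (xs : Fin m → OB), φ.Realize v xs →
    ∃ M, ∀ N, M ≤ N → φ.Realize (g N ∘ v) (g N ∘ xs) := by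
  induction h with
  | of_conj hc =>
    intro v xs hr
    refine ⟨(Finset.univ.sup fun b : _ ⊕ Fin _ => (Sum.elim v xs b).getD 0) + 3,
      fun N hNle => ?_⟩
    refine conj_g N (by omega) hc v xs ?_ hr
    intro b k hk
    have : (Sum.elim v xs b).getD 0 ≤
        Finset.univ.sup fun b => (Sum.elim v xs b).getD 0 :=
      Finset.le_sup (f := fun b => (Sum.elim v xs b).getD 0) (Finset.mem_univ b)
    rw [hk] at this
    simp only [Option.getD_some] at this
    omega
  | @ex m ψ _ ih =>
    intro v xs hr
    rw [BoundedFormula.realize_ex] at hr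
    obtain ⟨w, hw⟩ := hr
    obtain ⟨M, hM⟩ := ih v (Fin.snoc xs w) hw
    refine ⟨M, fun N hNle => ?_⟩
    rw [BoundedFormula.realize_ex]
    refine ⟨g N w, ?_⟩
    have := hM N hNle
    rwa [Fin.comp_snoc] at this

/-- Example 7, continued.  There is no primitive positive formula
`φ(x₁,…,xₙ,y)` defining a function in the class `{B}`, together with parameters
`a₁,…,aₙ ∈ ℕ`, such that `B ⊨ φ(ā, ∞)`.  Hence the implication "epic substructure ⇒
primitive positive generation" fails for `{B}`, a class not closed under
ultraproducts. -/
theorem no_pp_formula_defines_infinity :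
    ¬ ∃ (n : ℕ) (φ : Lsig.Formula (Fin (n + 1))) (a : Fin n → ℕ),
        IsPP φ ∧
        (∀ (v : Fin n → OB) (y z : OB),
          φ.Realize (Fin.snoc v y) → φ.Realize (Fin.snoc v z) → y = z) ∧
        φ.Realize (Fin.snoc (fun i => (some (a i) : OB)) (none : OB)) := by
  rintro ⟨n, φ, a, hpp, hfun, hreal⟩
  obtain ⟨M, hM⟩ := pp_g hpp _ _ hreal
  have h2 := hM M le_rfl
  have hcomp : g M ∘ Fin.snoc (fun i => (some (a i) : OB)) (none : OB) =
      Fin.snoc (fun i => (some (a i) : OB)) (some M) := by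
    rw [Fin.comp_snoc]
    congr 1
  rw [hcomp] at h2
  have h3 : φ.Realize (Fin.snoc (fun i => (some (a i) : OB)) (some M)) := by
    unfold FirstOrder.Language.Formula.Realize
    convert h2 using 2
  exact Option.some_ne_none M (hfun _ none (some M) hreal h3).symm

end EpicExample
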